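/- Let r be an odd prime and A = exp(2πi/(4r)). Then the complex number μ · (−A³·(∑_{k=0}^{r−1} A^(−4k²) − (1/2)·∑_{k=0}^{4r−1} A^(−k²)))/(A² − A^(−2)), where μ = (2/√r)·sin(π/r), has absolute value 1. -/

import Mathlib

open Finset Complex

private lemma sum_range_even_odd {M : Type*} [AddCommMonoid M] (f : ℕ → M) (n : ℕ) :
    ∑ i ∈ Finset.range (2 * n), f i
      = ∑ i ∈ Finset.range n, f (2 * i) + ∑ i ∈ Finset.range n, f (2 * i + 1) := by
  induction n with
  | zero => simp
  | succ n ih =>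
    rw [show 2 * (n + 1) = (2 * n) + 1 + 1 by ring, Finset.sum_range_succ,
      Finset.sum_range_succ, Finset.sum_range_succ (fun i => f (2 * i)),
      Finset.sum_range_succ (fun i => f (2 * i + 1)), ih]
    abel

private lemma sum_range_add_aux {M : Type*} [AddCommMonoid M] (f : ℕ → M) (m n : ℕ) :
    ∑ i ∈ Finset.range (m + n), f i
      = ∑ i ∈ Finset.range m, f i + ∑ i ∈ Finset.range n, f (m + i) := by
  induction n with
  | zero => simp
  | succ n ih =>
    rw [show m + (n + 1) = (m + n) + 1 by ring, Finset.sum_range_succ,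
      Finset.sum_range_succ (fun i => f (m + i)), ih]
    abel

theorem stmt8 (r : ℕ) (hp : r.Prime) (hodd : Odd r)
    (A : ℂ) (hA : A = Complex.exp (2 * Real.pi * Complex.I / (4 * r)))
    (μ : ℝ) (hμ : μ = (2 / Real.sqrt r) * Real.sin (Real.pi / r)) :
    ‖(μ : ℂ) * (-A ^ 3 *
        ((∑ k ∈ Finset.range r, A ^ (-(4 * (k : ℤ) ^ 2)))
          - (1 / 2) * ∑ k ∈ Finset.range (4 * r), A ^ (-((k : ℤ) ^ 2))))
      / (A ^ 2 - A ^ (-2 : ℤ))‖ = 1 := by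
  haveI : NeZero r := ⟨hp.ne_zero⟩
  haveI : Fact r.Prime := ⟨hp⟩
  have hr2 : 2 ≤ r := hp.two_le
  have hr3 : 3 ≤ r := by
    rcases hodd with ⟨m, hm⟩
    omega
  have hrC : (r : ℂ) ≠ 0 := Nat.cast_ne_zero.mpr hp.ne_zero
  have hA0 : A ≠ 0 := by rw [hA]; exact Complex.exp_ne_zero _
  -- basic facts about A
  have habsA : ‖A‖ = 1 := by
    rw [hA, show 2 * (Real.pi : ℂ) * Complex.I / (4 * (r : ℂ))
        = ((2 * Real.pi / (4 * r) : ℝ) : ℂ) * Complex.I by push_cast; ring]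
    exact Complex.norm_exp_ofReal_mul_I _
  have hB : A ^ 4 = Complex.exp (2 * Real.pi * Complex.I / r) := by
    rw [hA, ← Complex.exp_nat_mul]
    congr 1
    field_simp
    ring
  have hBprim : IsPrimitiveRoot (A ^ 4) r := by
    rw [hB]; exact Complex.isPrimitiveRoot_exp r hp.ne_zero
  set ζ : ℂ := (A ^ 4)⁻¹ with hζdef
  have hζprim : IsPrimitiveRoot ζ r := hBprim.inv
  have hζ1 : ζ ^ r = 1 := hζprim.pow_eq_one
  set ψ : AddChar (ZMod r) ℂ := AddChar.zmodChar r hζ1 with hψdef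
  have hψprim : ψ.IsPrimitive := AddChar.zmodChar_primitive_of_primitive_root r hζprim
  have habsζ : ‖ζ‖ = 1 := by
    rw [hζdef, norm_inv, norm_pow, habsA]; norm_num
  have hψabs : ∀ a : ZMod r, ‖ψ a‖ = 1 := by
    intro a
    rw [hψdef, AddChar.zmodChar_apply, norm_pow, habsζ, one_pow]
  have hconj : ∀ a : ZMod r, (starRingEnd ℂ) (ψ a) = ψ (-a) := by
    intro a
    rw [← Complex.inv_eq_conj (hψabs a), ← AddChar.map_neg_eq_inv]
  -- exponent conversions
  have key1 : ∀ n : ℕ, A ^ (-(4 * (n : ℤ))) = ζ ^ n := by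
    intro n
    rw [hζdef, inv_pow, ← pow_mul,
      show (-(4 * (n : ℤ))) = -((4 * n : ℕ) : ℤ) by push_cast; ring,
      zpow_neg, zpow_natCast]
  have e1 : ∀ k : ℕ, A ^ (-(4 * (k : ℤ) ^ 2)) = ζ ^ (k ^ 2) := by
    intro k
    rw [show -(4 * (k : ℤ) ^ 2) = -(4 * ((k ^ 2 : ℕ) : ℤ)) by push_cast; ring]
    exact key1 (k ^ 2)
  have e2 : ∀ m : ℕ, A ^ (-(((2 * m : ℕ) : ℤ) ^ 2)) = ζ ^ (m ^ 2) := by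
    intro m
    rw [show -(((2 * m : ℕ) : ℤ) ^ 2) = -(4 * ((m ^ 2 : ℕ) : ℤ)) by push_cast; ring]
    exact key1 (m ^ 2)
  have e3 : ∀ m : ℕ, A ^ (-(((2 * m + 1 : ℕ) : ℤ) ^ 2)) = A ^ (-1 : ℤ) * ζ ^ (m ^ 2 + m) := by
    intro m
    rw [show -(((2 * m + 1 : ℕ) : ℤ) ^ 2) = (-1) + -(4 * ((m ^ 2 + m : ℕ) : ℤ)) by
      push_cast; ring, zpow_add₀ hA0, key1 (m ^ 2 + m)]
  -- periodicity of ζ powers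
  have hz : ∀ a b : ℕ, ζ ^ (a + r * b) = ζ ^ a := by
    intro a b
    rw [pow_add, pow_mul, hζ1, one_pow, mul_one]
  set S1 : ℂ := ∑ k ∈ Finset.range r, ζ ^ (k ^ 2) with hS1def
  set T : ℂ := ∑ k ∈ Finset.range r, ζ ^ (k ^ 2 + k) with hTdef
  -- the big sum
  have hS2 : (∑ k ∈ Finset.range (4 * r), A ^ (-((k : ℤ) ^ 2)))
      = 2 * S1 + 2 * A ^ (-1 : ℤ) * T := by
    rw [show 4 * r = 2 * (2 * r) by ring,
      sum_range_even_odd (fun k => A ^ (-((k : ℤ) ^ 2)))]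
    have heven : (∑ i ∈ Finset.range (2 * r), A ^ (-(((2 * i : ℕ) : ℤ) ^ 2))) = 2 * S1 := by
      calc (∑ i ∈ Finset.range (2 * r), A ^ (-(((2 * i : ℕ) : ℤ) ^ 2)))
          = ∑ i ∈ Finset.range (2 * r), ζ ^ (i ^ 2) :=
            Finset.sum_congr rfl fun i _ => e2 i
        _ = ∑ i ∈ Finset.range r, ζ ^ (i ^ 2) + ∑ i ∈ Finset.range r, ζ ^ ((r + i) ^ 2) := by
            rw [show 2 * r = r + r by ring, sum_range_add_aux]
        _ = 2 * S1 := by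
            rw [hS1def, show (∑ i ∈ Finset.range r, ζ ^ ((r + i) ^ 2))
                = ∑ i ∈ Finset.range r, ζ ^ (i ^ 2) from
              Finset.sum_congr rfl fun i _ => by
                rw [show (r + i) ^ 2 = i ^ 2 + r * (r + 2 * i) by ring, hz]]
            ring
    have hodd' : (∑ i ∈ Finset.range (2 * r), A ^ (-(((2 * i + 1 : ℕ) : ℤ) ^ 2)))
        = 2 * A ^ (-1 : ℤ) * T := by
      calc (∑ i ∈ Finset.range (2 * r), A ^ (-(((2 * i + 1 : ℕ) : ℤ) ^ 2)))
          = ∑ i ∈ Finset.range (2 * r), A ^ (-1 : ℤ) * ζ ^ (i ^ 2 + i) :=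
            Finset.sum_congr rfl fun i _ => e3 i
        _ = A ^ (-1 : ℤ) * ∑ i ∈ Finset.range (2 * r), ζ ^ (i ^ 2 + i) := by
            rw [Finset.mul_sum]
        _ = A ^ (-1 : ℤ) * (∑ i ∈ Finset.range r, ζ ^ (i ^ 2 + i)
              + ∑ i ∈ Finset.range r, ζ ^ ((r + i) ^ 2 + (r + i))) := by
            rw [show 2 * r = r + r by ring, sum_range_add_aux]
        _ = 2 * A ^ (-1 : ℤ) * T := by
            rw [hTdef, show (∑ i ∈ Finset.range r, ζ ^ ((r + i) ^ 2 + (r + i)))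
                = ∑ i ∈ Finset.range r, ζ ^ (i ^ 2 + i) from
              Finset.sum_congr rfl fun i _ => by
                rw [show (r + i) ^ 2 + (r + i) = (i ^ 2 + i) + r * (r + 2 * i + 1) by ring, hz]]
            ring
    push_cast at heven hodd' ⊢
    rw [heven, hodd']
  -- |T|^2 = r
  have hT' : T = ∑ x : ZMod r, ψ (x ^ 2 + x) := by
    rw [hTdef, eq_comm]
    refine Finset.sum_nbij' (fun x : ZMod r => x.val) (fun m : ℕ => (m : ZMod r))
      (fun x _ => Finset.mem_range.mpr (ZMod.val_lt x))
      (fun m _ => Finset.mem_univ _)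
      (fun x _ => ZMod.natCast_rightInverse x)
      (fun m hm => ZMod.val_cast_of_lt (Finset.mem_range.mp hm))
      (fun x _ => ?_)
    have hx : ((x.val : ℕ) : ZMod r) = x := ZMod.natCast_rightInverse x
    calc ψ (x ^ 2 + x) = ψ (((x.val ^ 2 + x.val : ℕ) : ZMod r)) := by
          rw [show (((x.val ^ 2 + x.val : ℕ)) : ZMod r)
              = ((x.val : ℕ) : ZMod r) ^ 2 + ((x.val : ℕ) : ZMod r) by push_cast; ring, hx]
      _ = ζ ^ (x.val ^ 2 + x.val) := AddChar.zmodChar_apply' hζ1 _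
  have h2ne : (2 : ZMod r) ≠ 0 := by
    intro h
    have : (r : ℕ) ∣ 2 := by
      have := (ZMod.natCast_eq_zero_iff 2 r).mp (by exact_mod_cast h)
      exact this
    have := Nat.le_of_dvd (by norm_num) this
    omega
  have hTsq : T * (starRingEnd ℂ) T = (r : ℂ) := by
    calc T * (starRingEnd ℂ) T
        = ∑ x : ZMod r, ∑ y : ZMod r, ψ (x ^ 2 + x) * ψ (-(y ^ 2 + y)) := by
          rw [hT', map_sum, Finset.sum_mul_sum]
          exact Finset.sum_congr rfl fun x _ => Finset.sum_congr rfl fun y _ => by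
            rw [hconj]
      _ = ∑ y : ZMod r, ∑ x : ZMod r, ψ (x ^ 2 + x) * ψ (-(y ^ 2 + y)) := Finset.sum_comm
      _ = ∑ y : ZMod r, ∑ d : ZMod r, ψ (d ^ 2 + d) * ψ (y * (2 * d)) := by
          refine Finset.sum_congr rfl fun y _ => ?_
          refine (Fintype.sum_equiv (Equiv.addRight y) _ _ fun d => ?_).symm
          show ψ (d ^ 2 + d) * ψ (y * (2 * d))
            = ψ ((d + y) ^ 2 + (d + y)) * ψ (-(y ^ 2 + y))
          rw [← AddChar.map_add_eq_mul, ← AddChar.map_add_eq_mul]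
          congr 1
          ring
      _ = ∑ d : ZMod r, ψ (d ^ 2 + d) * ∑ y : ZMod r, ψ (y * (2 * d)) := by
          rw [Finset.sum_comm]
          exact Finset.sum_congr rfl fun d _ => (Finset.mul_sum _ _ _).symm
      _ = ∑ d : ZMod r, ψ (d ^ 2 + d)
            * (if (2 * d) = 0 then ((Fintype.card (ZMod r) : ℂ)) else 0) := by
          refine Finset.sum_congr rfl fun d _ => ?_
          rw [AddChar.sum_mulShift _ hψprim]
          split_ifs <;> simp
      _ = ∑ d : ZMod r, (if d = 0 then (r : ℂ) else 0) := by
          refine Finset.sum_congr rfl fun d _ => ?_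
          by_cases hd : d = 0
          · simp [hd, ZMod.card]
          · have : 2 * d ≠ 0 := mul_ne_zero h2ne hd
            simp [hd, this]
      _ = (r : ℂ) := by simp
  have hTabs : ‖T‖ = Real.sqrt r := by
    rw [Complex.mul_conj] at hTsq
    have hnsq : Complex.normSq T = (r : ℝ) := by exact_mod_cast hTsq
    rw [Complex.norm_def, hnsq]
  -- denominator
  have hsinpos : 0 < Real.sin (Real.pi / r) := by
    apply Real.sin_pos_of_pos_of_lt_pi
    · positivity
    · apply div_lt_self Real.pi_pos
      exact_mod_cast (by omega : 1 < r)
  have hden : A ^ 2 - A ^ (-2 : ℤ) = 2 * ((Real.sin (Real.pi / r) : ℝ) : ℂ) * Complex.I := by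
    have h2 : A ^ 2 = Complex.exp (((Real.pi / r : ℝ) : ℂ) * Complex.I) := by
      rw [hA, ← Complex.exp_nat_mul]
      congr 1
      push_cast
      field_simp
      ring
    have h2' : A ^ (-2 : ℤ) = Complex.exp ((-(Real.pi / r : ℝ) : ℂ) * Complex.I) := by
      rw [show (-2 : ℤ) = -(2 : ℕ) by norm_num, zpow_neg, zpow_natCast, h2,
        ← Complex.exp_neg]
      congr 1
      push_cast
      ring
    rw [h2, h2', Complex.exp_mul_I, Complex.exp_mul_I]
    push_cast
    simp only [Complex.cos_neg, Complex.sin_neg]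
    ring
  have habsden : ‖A ^ 2 - A ^ (-2 : ℤ)‖ = 2 * Real.sin (Real.pi / r) := by
    rw [hden]
    rw [norm_mul, norm_mul, Complex.norm_I, Complex.norm_real, Real.norm_eq_abs,
      abs_of_pos hsinpos]
    simp
  -- assemble
  have hsum1 : (∑ k ∈ Finset.range r, A ^ (-(4 * (k : ℤ) ^ 2))) = S1 :=
    Finset.sum_congr rfl fun k _ => e1 k
  rw [hsum1, hS2]
  have hA31 : -A ^ 3 * (S1 - 1 / 2 * (2 * S1 + 2 * A ^ (-1 : ℤ) * T)) = A ^ 2 * T := by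
    have h31 : A ^ 3 * A ^ (-1 : ℤ) = A ^ 2 := by
      rw [← zpow_natCast A 3, ← zpow_natCast A 2, ← zpow_add₀ hA0]
      norm_num
    calc -A ^ 3 * (S1 - 1 / 2 * (2 * S1 + 2 * A ^ (-1 : ℤ) * T))
        = A ^ 3 * A ^ (-1 : ℤ) * T := by ring
      _ = A ^ 2 * T := by rw [h31]
  rw [hA31, norm_div, norm_mul, norm_mul, habsden, norm_pow, habsA, hTabs,
    Complex.norm_real, Real.norm_eq_abs]
  have hμpos : 0 < μ := by
    rw [hμ]
    have : 0 < Real.sqrt r := Real.sqrt_pos.mpr (by positivity)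
    positivity
  rw [abs_of_pos hμpos, hμ]
  have hsqrt : Real.sqrt r ≠ 0 := ne_of_gt (Real.sqrt_pos.mpr (by positivity))
  field_simp
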